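/- In the multivariate power series ring ℚ[[x_1,x_2,x_3,x_4,q]] one has (Σ_{d≥2, d_1,d_2,d_3,d_4≥1} (12·C_{d−2}/d)·(d_1−1)(d_2−1)(d_3−1)(d_4−1)·x_1^{d_1} x_2^{d_2} x_3^{d_3} x_4^{d_4} q^d) · Π_{i=1}^{4}(1−x_i)^2 = [(6q − 1) + (1 − 4q)(1 − 2q·F(q))]·x_1^2 x_2^2 x_3^2 x_4^2. (This is Lemma 4.3: the generating function Ñ(x_1,x_2,x_3,x_4,q) of the weighted counts Ñ^d_{d_1,d_2,d_3,d_4} equals [(6q−1)+(1−4q)^{3/2}]·Π_i (x_i/(1−x_i))^2, stated with denominators cleared and with 1 − 2q·F(q) as the power-series form of (1−4q)^{1/2}.) -/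

import Mathlib

/-- The weighted count `Ñ^d_{d_1,d_2,d_3,d_4} = (12·C_{d−2}/d)·(d_1−1)(d_2−1)(d_3−1)(d_4−1)`. -/
noncomputable def tildeN (d d1 d2 d3 d4 : ℕ) : ℚ :=
  12 * (catalan (d - 2) : ℚ) / (d : ℚ) *
    ((d1 : ℚ) - 1) * ((d2 : ℚ) - 1) * ((d3 : ℚ) - 1) * ((d4 : ℚ) - 1)

/-- The variables: `Xv 0, Xv 1, Xv 2, Xv 3` are `x_1,x_2,x_3,x_4`, and `Xv 4` is `q`. -/
noncomputable def Xv (i : Fin 5) : MvPowerSeries (Fin 5) ℚ := MvPowerSeries.X i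

/-- The generating function `Ñ(x_1,x_2,x_3,x_4,q) =
Σ_{d≥2, d_i≥1} Ñ^d_{d_1,d_2,d_3,d_4} x_1^{d_1} x_2^{d_2} x_3^{d_3} x_4^{d_4} q^d`. -/
noncomputable def tildeNseries : MvPowerSeries (Fin 5) ℚ :=
  fun e => if 1 ≤ e 0 ∧ 1 ≤ e 1 ∧ 1 ≤ e 2 ∧ 1 ≤ e 3 ∧ 2 ≤ e 4
    then tildeN (e 4) (e 0) (e 1) (e 2) (e 3) else 0

/-- The Catalan generating function `F(q)`, viewed in `ℚ[[x_1,x_2,x_3,x_4,q]]`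
as a power series in the variable `q` alone. -/
noncomputable def catalanGFq : MvPowerSeries (Fin 5) ℚ :=
  fun e => if e 0 = 0 ∧ e 1 = 0 ∧ e 2 = 0 ∧ e 3 = 0 then (catalan (e 4) : ℚ) else 0

open MvPowerSeries Finsupp

/-- coefficient of `x^n` in `Σ (n-1) x^n`. -/
noncomputable def aF (n : ℕ) : ℚ := ((n - 1 : ℕ) : ℚ)

/-- coefficient of `q^d` in `Σ_{d≥2} (12 C_{d-2}/d) q^d`. -/
noncomputable def bF (d : ℕ) : ℚ := if 2 ≤ d then 12 * (catalan (d - 2) : ℚ) / (d : ℚ) else 0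

/-- indicator of `n = 2`. -/
noncomputable def iF (n : ℕ) : ℚ := if n = 2 then 1 else 0

lemma coeff_tildeNseries (e : Fin 5 →₀ ℕ) :
    MvPowerSeries.coeff e tildeNseries
      = aF (e 0) * aF (e 1) * aF (e 2) * aF (e 3) * bF (e 4) := by
  rw [MvPowerSeries.coeff_apply]
  show (if _ then _ else _) = _
  split_ifs with h
  · obtain ⟨h0, h1, h2, h3, h4⟩ := h
    rw [tildeN, aF, aF, aF, aF, bF, if_pos h4]
    push_cast [h0, h1, h2, h3]
    ring
  · rcases Decidable.not_and_iff_or_not.mp h with h0 | h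
    · have : e 0 = 0 := by omega
      simp [aF, this]
    rcases Decidable.not_and_iff_or_not.mp h with h1 | h
    · have : e 1 = 0 := by omega
      simp [aF, this]
    rcases Decidable.not_and_iff_or_not.mp h with h2 | h
    · have : e 2 = 0 := by omega
      simp [aF, this]
    rcases Decidable.not_and_iff_or_not.mp h with h3 | h4
    · have : e 3 = 0 := by omega
      simp [aF, this]
    · rw [bF, if_neg h4]; ring

lemma coeff_mul_one_sub_X_sq (f : MvPowerSeries (Fin 5) ℚ) (i : Fin 5) (e : Fin 5 →₀ ℕ) :
    MvPowerSeries.coeff e (f * (1 - MvPowerSeries.X i) ^ 2)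
      = MvPowerSeries.coeff e f
        - 2 * (if 1 ≤ e i then MvPowerSeries.coeff (e - Finsupp.single i 1) f else 0)
        + (if 2 ≤ e i then MvPowerSeries.coeff (e - Finsupp.single i 2) f else 0) := by
  have h : f * (1 - MvPowerSeries.X i) ^ 2
      = f - MvPowerSeries.C (σ := Fin 5) (R := ℚ) 2 *
          (f * MvPowerSeries.monomial (Finsupp.single i 1) 1)
        + f * MvPowerSeries.monomial (Finsupp.single i 2) 1 := by
    rw [← MvPowerSeries.X_pow_eq, ← MvPowerSeries.X_pow_eq, map_ofNat]
    ring
  rw [h, map_add, map_sub, MvPowerSeries.coeff_C_mul, MvPowerSeries.coeff_mul_monomial,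
    MvPowerSeries.coeff_mul_monomial]
  simp only [Finsupp.single_le_iff, mul_one]

lemma step (f : MvPowerSeries (Fin 5) ℚ) (i : Fin 5) (c : ℕ → ℚ) (r : (Fin 5 →₀ ℕ) → ℚ)
    (hf : ∀ e, MvPowerSeries.coeff e f = c (e i) * r e)
    (hr : ∀ e k, r (e - Finsupp.single i k) = r e)
    (hc : ∀ n, c n - 2 * (if 1 ≤ n then c (n - 1) else 0)
        + (if 2 ≤ n then c (n - 2) else 0) = iF n) :
    ∀ e, MvPowerSeries.coeff e (f * (1 - MvPowerSeries.X i) ^ 2) = iF (e i) * r e := by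
  intro e
  have hsub : ∀ k, (e - Finsupp.single i k) i = e i - k := by
    intro k
    rw [Finsupp.tsub_apply, Finsupp.single_eq_same]
  rw [coeff_mul_one_sub_X_sq, hf e, ← hc (e i)]
  by_cases h1 : 1 ≤ e i <;> by_cases h2 : 2 ≤ e i <;>
    simp [h1, h2, hf, hr, hsub] <;> ring

lemma aF_step (n : ℕ) :
    aF n - 2 * (if 1 ≤ n then aF (n - 1) else 0) + (if 2 ≤ n then aF (n - 2) else 0) = iF n := by
  match n with
  | 0 => simp [aF, iF]
  | 1 => simp [aF, iF]
  | 2 => simp [aF, iF]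
  | (m + 3) =>
    have h1 : (1:ℕ) ≤ m + 3 := by omega
    have h2 : (2:ℕ) ≤ m + 3 := by omega
    rw [if_pos h1, if_pos h2, iF, if_neg (by omega),
      show m + 3 - 1 = m + 2 from by omega, show m + 3 - 2 = m + 1 from by omega]
    simp only [aF]
    rw [show m + 3 - 1 = m + 2 from by omega, show m + 2 - 1 = m + 1 from by omega,
      show m + 1 - 1 = m from by omega]
    push_cast
    ring

lemma catalan_key (k : ℕ) :
    (8 : ℚ) * catalan k - 2 * catalan (k + 1) = 12 * (catalan k : ℚ) / ((k : ℚ) + 2) := by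
  have hk1 : ((k : ℚ) + 1) ≠ 0 := by positivity
  have hk2 : ((k : ℚ) + 2) ≠ 0 := by positivity
  have hA : ((k : ℚ) + 2) * catalan (k + 1) = (Nat.centralBinom (k + 1) : ℚ) := by
    have := succ_mul_catalan_eq_centralBinom (k + 1)
    exact_mod_cast congrArg (Nat.cast : ℕ → ℚ) this
  have hB : ((k : ℚ) + 1) * Nat.centralBinom (k + 1)
      = 2 * (2 * k + 1) * Nat.centralBinom k := by
    have := Nat.succ_mul_centralBinom_succ k
    exact_mod_cast congrArg (Nat.cast : ℕ → ℚ) this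
  have hC : ((k : ℚ) + 1) * catalan k = (Nat.centralBinom k : ℚ) := by
    have := succ_mul_catalan_eq_centralBinom k
    exact_mod_cast congrArg (Nat.cast : ℕ → ℚ) this
  have hB1 : (Nat.centralBinom (k + 1) : ℚ) = 2 * (2 * k + 1) * catalan k := by
    apply mul_left_cancel₀ hk1
    rw [hB, ← hC]
    ring
  have hA' : ((k : ℚ) + 2) * catalan (k + 1) = 2 * (2 * k + 1) * catalan k := by
    rw [hA, hB1]
  rw [eq_div_iff hk2]
  linear_combination (-2 : ℚ) * hA'

lemma finsupp5_eq_single4 (f : Fin 5 →₀ ℕ) (m : ℕ) :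
    f = Finsupp.single (4 : Fin 5) m ↔ f 0 = 0 ∧ f 1 = 0 ∧ f 2 = 0 ∧ f 3 = 0 ∧ f 4 = m := by
  constructor
  · rintro rfl
    refine ⟨?_, ?_, ?_, ?_, ?_⟩ <;> simp [Finsupp.single_apply]
  · rintro ⟨h0, h1, h2, h3, h4⟩
    ext j
    fin_cases j <;> simp_all [Finsupp.single_apply]

/-- Coefficients of the `q`-series factor on the right-hand side. -/
lemma coeff_G (f : Fin 5 →₀ ℕ) :
    MvPowerSeries.coeff f
        ((6 * Xv 4 - 1) + (1 - 4 * Xv 4) * (1 - 2 * Xv 4 * catalanGFq))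
      = (if f 0 = 0 ∧ f 1 = 0 ∧ f 2 = 0 ∧ f 3 = 0 then 1 else 0) * bF (f 4) := by
  have hexp : (6 * Xv 4 - 1) + (1 - 4 * Xv 4) * (1 - 2 * Xv 4 * catalanGFq)
      = MvPowerSeries.C (σ := Fin 5) (R := ℚ) 2 *
          MvPowerSeries.monomial (Finsupp.single (4 : Fin 5) 1) 1
        - MvPowerSeries.C (σ := Fin 5) (R := ℚ) 2 *
          (catalanGFq * MvPowerSeries.monomial (Finsupp.single (4 : Fin 5) 1) 1)
        + MvPowerSeries.C (σ := Fin 5) (R := ℚ) 8 *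
          (catalanGFq * MvPowerSeries.monomial (Finsupp.single (4 : Fin 5) 2) 1) := by
    rw [← MvPowerSeries.X_pow_eq, ← MvPowerSeries.X_pow_eq, map_ofNat, map_ofNat, Xv]
    ring
  rw [hexp, map_add, map_sub, MvPowerSeries.coeff_C_mul, MvPowerSeries.coeff_C_mul,
    MvPowerSeries.coeff_C_mul, MvPowerSeries.coeff_mul_monomial, MvPowerSeries.coeff_mul_monomial,
    MvPowerSeries.coeff_monomial]
  simp only [Finsupp.single_le_iff, mul_one]
  have hC : ∀ g : Fin 5 →₀ ℕ, MvPowerSeries.coeff g catalanGFq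
      = if g 0 = 0 ∧ g 1 = 0 ∧ g 2 = 0 ∧ g 3 = 0 then (catalan (g 4) : ℚ) else 0 := fun g => rfl
  have hsub : ∀ (k : ℕ) (j : Fin 5), j ≠ 4 →
      (f - Finsupp.single (4 : Fin 5) k) j = f j := by
    intro k j hj
    rw [Finsupp.tsub_apply, Finsupp.single_eq_of_ne' (fun h => hj h.symm), Nat.sub_zero]
  have hs0 : ∀ k : ℕ, (f - Finsupp.single (4 : Fin 5) k) 0 = f 0 := fun k => hsub k 0 (by decide)
  have hs1 : ∀ k : ℕ, (f - Finsupp.single (4 : Fin 5) k) 1 = f 1 := fun k => hsub k 1 (by decide)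
  have hs2 : ∀ k : ℕ, (f - Finsupp.single (4 : Fin 5) k) 2 = f 2 := fun k => hsub k 2 (by decide)
  have hs3 : ∀ k : ℕ, (f - Finsupp.single (4 : Fin 5) k) 3 = f 3 := fun k => hsub k 3 (by decide)
  have hsub4 : ∀ k : ℕ, (f - Finsupp.single (4 : Fin 5) k) 4 = f 4 - k := by
    intro k
    rw [Finsupp.tsub_apply, Finsupp.single_eq_same]
  simp only [hC, hs0, hs1, hs2, hs3, hsub4, finsupp5_eq_single4]
  by_cases hP : f 0 = 0 ∧ f 1 = 0 ∧ f 2 = 0 ∧ f 3 = 0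
  · obtain ⟨h0, h1, h2, h3⟩ := hP
    simp only [h0, h1, h2, h3, eq_self_iff_true, true_and, if_true, one_mul]
    generalize f 4 = d
    match d with
    | 0 => norm_num [bF]
    | 1 => norm_num [bF]
    | (k + 2) =>
      rw [if_neg (by omega), if_pos (by omega), if_pos (by omega), bF, if_pos (by omega),
        show k + 2 - 1 = k + 1 from by omega, show k + 2 - 2 = k from by omega]
      have h := catalan_key k
      push_cast at h ⊢
      linarith
  · have hfalse : ¬(f 0 = 0 ∧ f 1 = 0 ∧ f 2 = 0 ∧ f 3 = 0 ∧ f 4 = 1) :=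
      fun h => hP ⟨h.1, h.2.1, h.2.2.1, h.2.2.2.1⟩
    rw [if_neg hfalse, if_neg hP, if_neg hP, if_neg hP]
    simp

lemma sub_single_apply_ne (e : Fin 5 →₀ ℕ) (i j : Fin 5) (k : ℕ) (h : j ≠ i) :
    (e - Finsupp.single i k) j = e j := by
  rw [Finsupp.tsub_apply, Finsupp.single_eq_of_ne' (fun hh => h hh.symm), Nat.sub_zero]

/-- The exponent of the monomial `x_1^2 x_2^2 x_3^2 x_4^2`. -/
noncomputable def Mexp : Fin 5 →₀ ℕ :=
  Finsupp.single (0 : Fin 5) 2 + Finsupp.single 1 2 + Finsupp.single 2 2 + Finsupp.single 3 2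

lemma Mexp0 : Mexp 0 = 2 := by simp [Mexp, Finsupp.single_apply]
lemma Mexp1 : Mexp 1 = 2 := by simp [Mexp, Finsupp.single_apply]
lemma Mexp2 : Mexp 2 = 2 := by simp [Mexp, Finsupp.single_apply]
lemma Mexp3 : Mexp 3 = 2 := by simp [Mexp, Finsupp.single_apply]
lemma Mexp4 : Mexp 4 = 0 := by simp [Mexp, Finsupp.single_apply]

lemma Mexp_le (e : Fin 5 →₀ ℕ) (h0 : 2 ≤ e 0) (h1 : 2 ≤ e 1) (h2 : 2 ≤ e 2) (h3 : 2 ≤ e 3) :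
    Mexp ≤ e := by
  rw [Finsupp.le_def]
  intro j
  fin_cases j
  · show Mexp 0 ≤ e 0; rw [Mexp0]; exact h0
  · show Mexp 1 ≤ e 1; rw [Mexp1]; exact h1
  · show Mexp 2 ≤ e 2; rw [Mexp2]; exact h2
  · show Mexp 3 ≤ e 3; rw [Mexp3]; exact h3
  · show Mexp 4 ≤ e 4; rw [Mexp4]; exact Nat.zero_le _

/-- Lemma 4.3 with denominators cleared:
`Ñ(x,q) · Π_i (1−x_i)^2 = [(6q−1) + (1−4q)(1−2q·F(q))] · Π_i x_i^2`. -/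
theorem tildeN_gf_formula :
    tildeNseries * ((1 - Xv 0) ^ 2 * (1 - Xv 1) ^ 2 * (1 - Xv 2) ^ 2 * (1 - Xv 3) ^ 2) =
      ((6 * Xv 4 - 1) + (1 - 4 * Xv 4) * (1 - 2 * Xv 4 * catalanGFq)) *
        ((Xv 0) ^ 2 * (Xv 1) ^ 2 * (Xv 2) ^ 2 * (Xv 3) ^ 2) := by
  have s1 := step tildeNseries 0 aF (fun e => aF (e 1) * aF (e 2) * aF (e 3) * bF (e 4))
    (fun e => by rw [coeff_tildeNseries]; ring)
    (fun e k => by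
      beta_reduce
      rw [sub_single_apply_ne e 0 1 k (by decide), sub_single_apply_ne e 0 2 k (by decide),
        sub_single_apply_ne e 0 3 k (by decide), sub_single_apply_ne e 0 4 k (by decide)])
    aF_step
  have s2 := step (tildeNseries * (1 - MvPowerSeries.X 0) ^ 2) 1 aF
    (fun e => iF (e 0) * (aF (e 2) * aF (e 3) * bF (e 4)))
    (fun e => by rw [s1 e]; ring)
    (fun e k => by
      beta_reduce
      rw [sub_single_apply_ne e 1 0 k (by decide), sub_single_apply_ne e 1 2 k (by decide),
        sub_single_apply_ne e 1 3 k (by decide), sub_single_apply_ne e 1 4 k (by decide)])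
    aF_step
  have s3 := step (tildeNseries * (1 - MvPowerSeries.X 0) ^ 2 * (1 - MvPowerSeries.X 1) ^ 2) 2 aF
    (fun e => iF (e 0) * iF (e 1) * (aF (e 3) * bF (e 4)))
    (fun e => by rw [s2 e]; ring)
    (fun e k => by
      beta_reduce
      rw [sub_single_apply_ne e 2 0 k (by decide), sub_single_apply_ne e 2 1 k (by decide),
        sub_single_apply_ne e 2 3 k (by decide), sub_single_apply_ne e 2 4 k (by decide)])
    aF_step
  have s4 := step (tildeNseries * (1 - MvPowerSeries.X 0) ^ 2 * (1 - MvPowerSeries.X 1) ^ 2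
      * (1 - MvPowerSeries.X 2) ^ 2) 3 aF
    (fun e => iF (e 0) * iF (e 1) * iF (e 2) * bF (e 4))
    (fun e => by rw [s3 e]; ring)
    (fun e k => by
      beta_reduce
      rw [sub_single_apply_ne e 3 0 k (by decide), sub_single_apply_ne e 3 1 k (by decide),
        sub_single_apply_ne e 3 2 k (by decide), sub_single_apply_ne e 3 4 k (by decide)])
    aF_step
  have hL : tildeNseries * ((1 - Xv 0) ^ 2 * (1 - Xv 1) ^ 2 * (1 - Xv 2) ^ 2 * (1 - Xv 3) ^ 2)
      = tildeNseries * (1 - MvPowerSeries.X 0) ^ 2 * (1 - MvPowerSeries.X 1) ^ 2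
        * (1 - MvPowerSeries.X 2) ^ 2 * (1 - MvPowerSeries.X 3) ^ 2 := by
    simp only [Xv]
    ring
  have hmono : (Xv 0) ^ 2 * (Xv 1) ^ 2 * (Xv 2) ^ 2 * (Xv 3) ^ 2
      = MvPowerSeries.monomial Mexp 1 := by
    simp only [Xv, MvPowerSeries.X_pow_eq, MvPowerSeries.monomial_mul_monomial, Mexp]
    norm_num
  apply MvPowerSeries.ext
  intro e
  rw [hL, s4 e, hmono, MvPowerSeries.coeff_mul_monomial]
  by_cases hle : Mexp ≤ e
  · have h0 : 2 ≤ e 0 := Mexp0 ▸ Finsupp.le_def.mp hle 0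
    have h1 : 2 ≤ e 1 := Mexp1 ▸ Finsupp.le_def.mp hle 1
    have h2 : 2 ≤ e 2 := Mexp2 ▸ Finsupp.le_def.mp hle 2
    have h3 : 2 ≤ e 3 := Mexp3 ▸ Finsupp.le_def.mp hle 3
    rw [if_pos hle, mul_one, coeff_G]
    have hE0 : (e - Mexp) 0 = e 0 - 2 := by rw [Finsupp.tsub_apply, Mexp0]
    have hE1 : (e - Mexp) 1 = e 1 - 2 := by rw [Finsupp.tsub_apply, Mexp1]
    have hE2 : (e - Mexp) 2 = e 2 - 2 := by rw [Finsupp.tsub_apply, Mexp2]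
    have hE3 : (e - Mexp) 3 = e 3 - 2 := by rw [Finsupp.tsub_apply, Mexp3]
    have hE4 : (e - Mexp) 4 = e 4 := by rw [Finsupp.tsub_apply, Mexp4, Nat.sub_zero]
    rw [hE0, hE1, hE2, hE3, hE4]
    simp only [iF]
    split_ifs <;> first | ring1 | (exfalso; omega)
  · rw [if_neg hle]
    have hlt : ¬(2 ≤ e 0 ∧ 2 ≤ e 1 ∧ 2 ≤ e 2 ∧ 2 ≤ e 3) := by
      rintro ⟨h0, h1, h2, h3⟩
      exact hle (Mexp_le e h0 h1 h2 h3)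
    simp only [iF]
    split_ifs <;> first | ring1 | (exfalso; omega)
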